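/- Let g be a directed complete graph on a finite set A with edge weights in {1,…,n}, containing a directed cycle but no directed cycle of uniform weight. For a cycle c, let μ(c) = (μₙ(c), μₙ₋₁(c), …, μ₁(c)) where μᵢ(c) is the number of edges of weight i in c, and order cycles lexicographically by μ. Let c = (a₀ →^{w₁} a₁ → ⋯ →^{w_k} a_k = a₀) be a minimal cycle, let U ⊆ {1,…,k} be a nonempty set of indices i with wᵢ > 1, and let g_U be the graph obtained from g by reversing each edge a_{i-1} → aᵢ for i ∈ U and decreasing its weight by 1. Then g_U contains no cycle of uniform weight. -/

import Mathlib

open Classical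

structure CGraph (A : Type) (n : ℕ) where
  dir : A → A → Prop
  wt : A → A → ℕ
  dir_irrefl : ∀ a, ¬ dir a a
  dir_total : ∀ a b, a ≠ b → (dir a b ↔ ¬ dir b a)
  wt_symm : ∀ a b, wt a b = wt b a
  wt_irrefl : ∀ a, wt a a = 0
  wt_pos : ∀ a b, a ≠ b → 1 ≤ wt a b
  wt_le_n : ∀ a b, a ≠ b → wt a b ≤ n

/-- A directed cycle `c 0 → c 1 → ⋯ → c k → c 0` (of length `k+1`) in `g`. -/
def IsCycle {A : Type} {n : ℕ} (g : CGraph A n) {k : ℕ} (c : Fin (k + 1) → A) : Prop :=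
  ∀ i : Fin (k + 1), g.dir (c i) (c (i + 1))

/-- A cycle of uniform weight `w`. -/
def IsUniformCycle {A : Type} {n : ℕ} (g : CGraph A n) {k : ℕ} (c : Fin (k + 1) → A)
    (w : ℕ) : Prop :=
  ∀ i : Fin (k + 1), g.dir (c i) (c (i + 1)) ∧ g.wt (c i) (c (i + 1)) = w

/-- `μ_w(c)`: the number of edges of weight `w` in the cycle `c`. -/
noncomputable def mu {A : Type} {n : ℕ} (g : CGraph A n) {k : ℕ} (c : Fin (k + 1) → A)
    (w : ℕ) : ℕ :=
  (Finset.univ.filter fun i : Fin (k + 1) => g.wt (c i) (c (i + 1)) = w).card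

/-- The lexicographic order on the weight-count vectors `μ(c) = (μₙ(c), μₙ₋₁(c), …, μ₁(c))`,
comparing the counts for the largest weights first. -/
def MuLt {A : Type} {n : ℕ} (g : CGraph A n) {k l : ℕ} (c : Fin (k + 1) → A)
    (d : Fin (l + 1) → A) : Prop :=
  ∃ w, mu g c w < mu g d w ∧ ∀ v, w < v → mu g c v = mu g d v

/-- The direction relation of the modified graph `g_U`: the edges `c i → c (i+1)` for `i ∈ U`
are reversed, all other edges are unchanged. -/
def dirU {A : Type} {n : ℕ} (g : CGraph A n) {k : ℕ} (c : Fin (k + 1) → A)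
    (U : Finset (Fin (k + 1))) (x y : A) : Prop :=
  (∃ i ∈ U, x = c (i + 1) ∧ y = c i) ∨
    (g.dir x y ∧ ¬ ∃ i ∈ U, x = c i ∧ y = c (i + 1))

/-- The weight function of the modified graph `g_U`: the weights of the edges
`c i → c (i+1)` for `i ∈ U` are decreased by `1`, all other weights are unchanged. -/
noncomputable def wtU {A : Type} {n : ℕ} (g : CGraph A n) {k : ℕ} (c : Fin (k + 1) → A)
    (U : Finset (Fin (k + 1))) (x y : A) : ℕ :=
  if ∃ i ∈ U, (x = c i ∧ y = c (i + 1)) ∨ (x = c (i + 1) ∧ y = c i) then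
    g.wt x y - 1
  else g.wt x y

open Fin.NatCast Fin.CommRing in
/-- if `g` contains a cycle but no cycle of uniform weight, `c` is a
(simple) cycle which is minimal for the lexicographic order on `μ`, and `U` is a nonempty
set of indices of edges of `c` of weight `> 1`, then the graph `g_U` obtained by reversing
those edges and decreasing their weights by `1` contains no cycle of uniform weight. -/
theorem statement3 {A : Type} {n : ℕ} (g : CGraph A n)
    (hcycle : ∃ (k : ℕ) (c : Fin (k + 1) → A), IsCycle g c)
    (hnouniform : ¬ ∃ (k : ℕ) (c : Fin (k + 1) → A) (w : ℕ), IsUniformCycle g c w)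
    {k : ℕ} (c : Fin (k + 1) → A) (hc : IsCycle g c) (hcinj : Function.Injective c)
    (hmin : ∀ (l : ℕ) (d : Fin (l + 1) → A), IsCycle g d → ¬ MuLt g d c)
    (U : Finset (Fin (k + 1))) (hU : U.Nonempty)
    (hUw : ∀ i ∈ U, 2 ≤ g.wt (c i) (c (i + 1))) :
    ¬ ∃ (l : ℕ) (d : Fin (l + 1) → A) (w : ℕ),
        ∀ i : Fin (l + 1), dirU g c U (d i) (d (i + 1)) ∧ wtU g c U (d i) (d (i + 1)) = w := by
  rintro ⟨l, d, w, hd⟩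
  classical
  -- Lemma A: a non-reversed edge of d is a g-edge of weight w
  have lemA : ∀ i : Fin (l+1), (¬ ∃ q ∈ U, d i = c (q+1) ∧ d (i+1) = c q) →
      g.dir (d i) (d (i+1)) ∧ g.wt (d i) (d (i+1)) = w := by
    intro i hrev
    obtain ⟨hdir, hwt⟩ := hd i
    rcases hdir with h | ⟨hgd, hnofwd⟩
    · exact absurd h hrev
    refine ⟨hgd, ?_⟩
    simp only [wtU] at hwt
    rwa [if_neg] at hwt
    rintro ⟨q, hq, (⟨h1, h2⟩ | ⟨h1, h2⟩)⟩
    · exact hnofwd ⟨q, hq, h1, h2⟩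
    · exact hrev ⟨q, hq, h1, h2⟩
  -- Lemma B: a reversed edge of d corresponds to an edge of c of weight w+1
  have lemB : ∀ (i : Fin (l+1)) (q : Fin (k+1)), q ∈ U → d i = c (q+1) → d (i+1) = c q →
      g.wt (c q) (c (q+1)) = w + 1 := by
    intro i q hq h1 h2
    have hwt := (hd i).2
    simp only [wtU] at hwt
    rw [if_pos ⟨q, hq, Or.inr ⟨h1, h2⟩⟩] at hwt
    rw [h1, h2, g.wt_symm] at hwt
    have := hUw q hq
    omega
  by_cases hnone : ∀ i : Fin (l+1), ¬ ∃ q ∈ U, d i = c (q+1) ∧ d (i+1) = c q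
  · exact hnouniform ⟨l, d, w, fun i => lemA i (hnone i)⟩
  by_cases hall : ∀ i : Fin (l+1), ∃ q ∈ U, d i = c (q+1) ∧ d (i+1) = c q
  · -- all edges reversed: c itself is uniform of weight w+1
    choose mf hmfU hmf1 hmf2 using hall
    have hstep : ∀ i, mf (i+1) = mf i - 1 := by
      intro i
      have h : c (mf (i+1) + 1) = c (mf i) := by rw [← hmf1 (i+1), hmf2 i]
      have h2 : mf (i+1) + 1 = mf i := hcinj h
      exact eq_sub_of_add_eq h2
    have hiter : ∀ t : ℕ, mf ((t : ℕ) : Fin (l+1)) = mf 0 - ((t : ℕ) : Fin (k+1)) := by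
      intro t
      induction t with
      | zero => simp
      | succ t ih =>
        have e1 : (((t+1 : ℕ)) : Fin (l+1)) = ((t:ℕ) : Fin (l+1)) + 1 := by push_cast; ring
        have e2 : (((t+1 : ℕ)) : Fin (k+1)) = ((t:ℕ) : Fin (k+1)) + 1 := by push_cast; ring
        rw [e1, hstep, ih, e2]
        ring
    refine hnouniform ⟨k, c, w + 1, fun j => ⟨hc j, ?_⟩⟩
    have ht := hiter (mf 0 - j).val
    rw [Fin.cast_val_eq_self] at ht
    have hj : mf (((mf 0 - j).val : ℕ) : Fin (l+1)) = j := by rw [ht]; ring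
    have := lemB _ _ (hmfU (((mf 0 - j).val : ℕ) : Fin (l+1))) (hmf1 _) (hmf2 _)
    rwa [hj] at this
  -- mixed case: there is a reversed edge followed by a forward edge
  push_neg at hnone
  obtain ⟨i₀, hi₀⟩ := hnone
  obtain ⟨i₁, hi₁⟩ := not_forall.mp hall
  -- find p with Rev p and ¬ Rev (p+1)
  have hex1 : ∃ t : ℕ, ¬ ∃ q ∈ U, d (i₀ + ((t:ℕ) : Fin (l+1))) = c (q+1) ∧
      d (i₀ + ((t:ℕ) : Fin (l+1)) + 1) = c q := by
    refine ⟨(i₁ - i₀).val, ?_⟩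
    rw [Fin.cast_val_eq_self]
    have e : i₀ + (i₁ - i₀) = i₁ := by ring
    rw [e]
    exact hi₁
  have ht₁pos : Nat.find hex1 ≠ 0 := by
    intro h
    have hsp := Nat.find_spec hex1
    rw [h] at hsp
    simp only [Nat.cast_zero, add_zero] at hsp
    exact hsp hi₀
  set p : Fin (l+1) := i₀ + (((Nat.find hex1 - 1 : ℕ)) : Fin (l+1)) with hpdef
  have hRevp : ∃ q ∈ U, d p = c (q+1) ∧ d (p+1) = c q := by
    have h := Nat.find_min hex1 (show Nat.find hex1 - 1 < Nat.find hex1 by omega)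
    exact not_not.mp h
  obtain ⟨m, hmU, hdp1, hdp2⟩ := hRevp
  have hp1 : p + 1 = i₀ + ((Nat.find hex1 : ℕ) : Fin (l+1)) := by
    rw [hpdef, add_assoc]
    congr 1
    have e : (Nat.find hex1 : ℕ) = (Nat.find hex1 - 1) + 1 := by omega
    rw [e]
    push_cast
    ring
  have hnRevp1 : ¬ ∃ q ∈ U, d (p+1) = c (q+1) ∧ d (p+1+1) = c q := by
    rw [hp1]
    exact Nat.find_spec hex1
  have hl : 1 ≤ l := by
    by_contra h
    have : i₀ = i₁ := by
      apply Fin.ext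
      have h0 := i₀.isLt
      have h1 := i₁.isLt
      omega
    exact hi₁ (this ▸ hi₀)
  -- find the next reversed edge after p
  have hwit : ∃ q ∈ U, d (p + (((l - 1) + 2 : ℕ) : Fin (l+1))) = c (q+1) ∧
      d (p + (((l - 1) + 2 : ℕ) : Fin (l+1)) + 1) = c q := by
    have e : (((l - 1) + 2 : ℕ) : Fin (l+1)) = 0 := by
      have e2 : (l - 1) + 2 = l + 1 := by omega
      rw [e2, Fin.natCast_self]
    rw [e, add_zero]
    exact ⟨m, hmU, hdp1, hdp2⟩
  have hex2 : ∃ u : ℕ, ∃ q ∈ U, d (p + (((u + 2 : ℕ)) : Fin (l+1))) = c (q+1) ∧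
      d (p + (((u + 2 : ℕ)) : Fin (l+1)) + 1) = c q := ⟨l - 1, hwit⟩
  set t₀ : ℕ := Nat.find hex2 + 2 with ht₀def
  have ht₀2 : 2 ≤ t₀ := by omega
  have hub : t₀ ≤ l + 1 := by
    have := Nat.find_min' hex2 hwit
    omega
  obtain ⟨j', hj'U, hdq1, hdq2⟩ := Nat.find_spec hex2
  have hnomid : ∀ s : ℕ, 1 ≤ s → s < t₀ →
      ¬ ∃ q ∈ U, d (p + ((s:ℕ) : Fin (l+1))) = c (q+1) ∧ d (p + ((s:ℕ) : Fin (l+1)) + 1) = c q := by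
    intro s hs1 hs2
    rcases s with _ | s
    · omega
    rcases s with _ | s
    · simpa using hnRevp1
    · exact Nat.find_min hex2 (by omega)
  -- basic facts
  have hwj' : g.wt (c j') (c (j'+1)) = w + 1 := lemB _ _ hj'U hdq1 hdq2
  have hne : ∀ a b : A, g.dir a b → a ≠ b := by
    intro a b h hab
    rw [hab] at h
    exact g.dir_irrefl b h
  have hwn : w + 1 ≤ n := by
    have := g.wt_le_n (c j') (c (j'+1)) (hne _ _ (hc j'))
    omega
  set len : ℕ := (m - (j' + 1) : Fin (k+1)).val with hlendef
  have hlenk : len ≤ k := by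
    have := (m - (j' + 1) : Fin (k+1)).isLt
    omega
  set N : ℕ := t₀ - 2 + len with hNdef
  set V : ℕ → A := fun x => if x < t₀ - 1 then d (p + 1 + ((x:ℕ) : Fin (l+1)))
      else c (j' + 1 + (((x - (t₀ - 1) : ℕ)) : Fin (k+1))) with hVdef
  have hVd : ∀ x : ℕ, x ≤ t₀ - 1 → V x = d (p + 1 + ((x:ℕ) : Fin (l+1))) := by
    intro x hx
    rcases lt_or_eq_of_le hx with h | h
    · simp only [hVdef]
      rw [if_pos h]
    · simp only [hVdef]
      rw [if_neg (by omega)]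
      rw [h]
      have e1 : (t₀ - 1) - (t₀ - 1) = 0 := by omega
      rw [e1]
      simp only [Nat.cast_zero, add_zero]
      have e2 : p + 1 + (((t₀ - 1 : ℕ)) : Fin (l+1)) = p + ((t₀ : ℕ) : Fin (l+1)) := by
        rw [Nat.cast_sub (by omega : 1 ≤ t₀)]
        push_cast
        ring
      rw [e2]
      have e4 : ((t₀ : ℕ) : Fin (l+1)) = ((Nat.find hex2 + 2 : ℕ) : Fin (l+1)) := by rw [ht₀def]
      rw [e4, hdq1]
  have hVc : ∀ x : ℕ, t₀ - 1 ≤ x → V x = c (j' + 1 + (((x - (t₀-1) : ℕ)) : Fin (k+1))) := by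
    intro x hx
    simp only [hVdef]
    rw [if_neg (by omega)]
  have hdVd : ∀ x : ℕ, x + 1 ≤ t₀ - 1 →
      ¬ ∃ q ∈ U, d (p + 1 + ((x:ℕ) : Fin (l+1))) = c (q+1) ∧
        d (p + 1 + ((x:ℕ) : Fin (l+1)) + 1) = c q := by
    intro x hx
    have e : p + 1 + ((x:ℕ) : Fin (l+1)) = p + (((x+1 : ℕ)) : Fin (l+1)) := by push_cast; ring
    rw [e]
    exact hnomid (x+1) (by omega) (by omega)
  have hedge : ∀ x : ℕ, x ≤ N → g.dir (V x) (V (x+1)) ∧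
      (g.wt (V x) (V (x+1)) = w ∨
        (t₀ - 1 ≤ x ∧ V x = c (j' + 1 + (((x - (t₀-1) : ℕ)) : Fin (k+1))) ∧
          V (x+1) = c ((j' + 1 + (((x - (t₀-1) : ℕ)) : Fin (k+1))) + 1))) := by
    intro x hxN
    by_cases hx : x < t₀ - 1
    · have e1 := hVd x (le_of_lt hx)
      have e2 := hVd (x+1) (by omega)
      have e3 : p + 1 + (((x+1 : ℕ)) : Fin (l+1)) = (p + 1 + ((x : ℕ) : Fin (l+1))) + 1 := by
        push_cast; ring
      rw [e3] at e2
      have h := lemA _ (hdVd x (by omega))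
      rw [e1, e2]
      exact ⟨h.1, Or.inl h.2⟩
    · push_neg at hx
      have e1 := hVc x hx
      have e2 := hVc (x+1) (by omega)
      have e3 : (((x + 1 - (t₀ - 1) : ℕ)) : Fin (k+1)) = (((x - (t₀-1) : ℕ)) : Fin (k+1)) + 1 := by
        have e4 : x + 1 - (t₀ - 1) = (x - (t₀ - 1)) + 1 := by omega
        rw [e4]
        push_cast
        ring
      rw [e3] at e2
      have e5 : j' + 1 + ((((x - (t₀-1) : ℕ)) : Fin (k+1)) + 1)
          = (j' + 1 + (((x - (t₀-1) : ℕ)) : Fin (k+1))) + 1 := by ring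
      rw [e5] at e2
      rw [e1, e2]
      exact ⟨hc _, Or.inr ⟨hx, rfl, rfl⟩⟩
  have hV0 : V 0 = c m := by
    rw [hVd 0 (by omega)]
    simp only [Nat.cast_zero, add_zero]
    exact hdp2
  have hVper : V (N + 1) = V 0 := by
    rw [hV0, hVc (N+1) (by omega)]
    have e : (N + 1) - (t₀ - 1) = len := by omega
    rw [e, hlendef, Fin.cast_val_eq_self]
    congr 1
    ring
  set W' : Fin (N+1) → A := fun i => V i.val with hW'def
  have hW'step : ∀ i : Fin (N+1), W' (i+1) = V (i.val + 1) := by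
    intro i
    rcases eq_or_ne i (Fin.last N) with h | h
    · subst h
      have e : (Fin.last N + 1) = (0 : Fin (N+1)) := by
        apply Fin.ext
        simp [Fin.add_def, Fin.last]
      rw [e]
      show V (0 : Fin (N+1)).val = V ((Fin.last N).val + 1)
      simp only [Fin.val_zero, Fin.val_last]
      exact hVper.symm
    · have hlt : i < Fin.last N := lt_of_le_of_ne (Fin.le_last i) h
      show V ((i+1).val) = V (i.val + 1)
      rw [Fin.val_add_one_of_lt hlt]
  have hW'cyc : IsCycle g W' := by
    intro i
    have hiN : i.val ≤ N := by have := i.isLt; omega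
    have := (hedge i.val hiN).1
    rw [hW'step i]
    exact this
  -- mu comparisons
  have hmain : ∀ v, w < v → mu g W' v ≤ mu g c v ∧ (v = w + 1 → mu g W' v < mu g c v) := by
    intro v hv
    set F : Fin (N+1) → Fin (k+1) := fun i => j' + 1 + (((i.val - (t₀-1) : ℕ)) : Fin (k+1))
      with hFdef
    have hdom : ∀ i : Fin (N+1), g.wt (W' i) (W' (i+1)) = v →
        t₀ - 1 ≤ i.val ∧ i.val - (t₀-1) + 1 ≤ len ∧ g.wt (c (F i)) (c (F i + 1)) = v := by
      intro i hi
      have hiN : i.val ≤ N := by have := i.isLt; omega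
      have hwte : g.wt (V i.val) (V (i.val+1)) = v := by rw [← hW'step i]; exact hi
      obtain ⟨-, hcase⟩ := hedge i.val hiN
      rcases hcase with hw' | ⟨hx, e1, e2⟩
      · omega
      · refine ⟨hx, by omega, ?_⟩
        rw [hFdef]
        simp only
        rw [← e1, ← e2]
        exact hwte
    have hinj : Set.InjOn F
        (Finset.univ.filter fun i : Fin (N+1) => g.wt (W' i) (W' (i+1)) = v) := by
      intro a ha b hb hab
      simp only [Finset.coe_filter, Set.mem_setOf_eq, Finset.mem_univ, true_and] at ha hb
      obtain ⟨ha1, ha2, -⟩ := hdom a ha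
      obtain ⟨hb1, hb2, -⟩ := hdom b hb
      have hsub : (((a.val - (t₀-1) : ℕ)) : Fin (k+1)) = (((b.val - (t₀-1) : ℕ)) : Fin (k+1)) :=
        add_left_cancel hab
      have hval := congrArg Fin.val hsub
      rw [Fin.val_natCast, Fin.val_natCast,
        Nat.mod_eq_of_lt (by omega), Nat.mod_eq_of_lt (by omega)] at hval
      exact Fin.ext (by omega)
    have hmem : ∀ i ∈ (Finset.univ.filter fun i : Fin (N+1) => g.wt (W' i) (W' (i+1)) = v),
        F i ∈ (Finset.univ.filter fun j : Fin (k+1) => g.wt (c j) (c (j+1)) = v) := by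
      intro i hi
      simp only [Finset.mem_filter, Finset.mem_univ, true_and] at hi ⊢
      exact (hdom i hi).2.2
    constructor
    · exact Finset.card_le_card_of_injOn F hmem hinj
    · intro hv1
      subst hv1
      have hFne : ∀ i ∈ (Finset.univ.filter fun i : Fin (N+1) =>
          g.wt (W' i) (W' (i+1)) = w + 1), F i ≠ j' := by
        intro i hi hFj
        simp only [Finset.mem_filter, Finset.mem_univ, true_and] at hi
        obtain ⟨h1, h2, -⟩ := hdom i hi
        have hs : (((i.val - (t₀-1) : ℕ)) : Fin (k+1)) = -1 := by
          have e : j' + 1 + (((i.val - (t₀-1) : ℕ)) : Fin (k+1)) = j' := hFj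
          linear_combination e
        have h0 : (((i.val - (t₀-1)) + 1 : ℕ) : Fin (k+1)) = 0 := by
          push_cast
          rw [hs]
          ring
        have hval := congrArg Fin.val h0
        rw [Fin.val_natCast, Nat.mod_eq_of_lt (by omega)] at hval
        simp at hval
      have hsub2 : ((Finset.univ.filter fun i : Fin (N+1) =>
            g.wt (W' i) (W' (i+1)) = w + 1)).image F ⊆
          (Finset.univ.filter fun j : Fin (k+1) => g.wt (c j) (c (j+1)) = w + 1) := by
        intro x hx
        rw [Finset.mem_image] at hx
        obtain ⟨i, hi, rfl⟩ := hx
        exact hmem i hi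
      have hj'mem : j' ∈ (Finset.univ.filter fun j : Fin (k+1) =>
          g.wt (c j) (c (j+1)) = w + 1) := by
        simp only [Finset.mem_filter, Finset.mem_univ, true_and]
        exact hwj'
      have hj'not : j' ∉ ((Finset.univ.filter fun i : Fin (N+1) =>
          g.wt (W' i) (W' (i+1)) = w + 1)).image F := by
        rw [Finset.mem_image]
        rintro ⟨i, hi, hFi⟩
        exact hFne i hi hFi
      have hss := (Finset.ssubset_iff_of_subset hsub2).2 ⟨j', hj'mem, hj'not⟩
      calc mu g W' (w+1)
          = ((Finset.univ.filter fun i : Fin (N+1) =>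
              g.wt (W' i) (W' (i+1)) = w + 1)).card := rfl
        _ = (((Finset.univ.filter fun i : Fin (N+1) =>
              g.wt (W' i) (W' (i+1)) = w + 1)).image F).card :=
            (Finset.card_image_of_injOn hinj).symm
        _ < _ := Finset.card_lt_card hss
  have hzero : ∀ v, n < v → mu g W' v = 0 ∧ mu g c v = 0 := by
    intro v hv
    constructor
    · unfold mu
      rw [Finset.card_eq_zero, Finset.filter_eq_empty_iff]
      intro i _
      have := g.wt_le_n _ _ (hne _ _ (hW'cyc i))
      omega
    · unfold mu
      rw [Finset.card_eq_zero, Finset.filter_eq_empty_iff]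
      intro i _
      have := g.wt_le_n _ _ (hne _ _ (hc i))
      omega
  set B := (Finset.range (n+1)).filter (fun v => mu g W' v < mu g c v) with hBdef
  have hBmem : w + 1 ∈ B := by
    simp only [hBdef, Finset.mem_filter, Finset.mem_range]
    exact ⟨by omega, (hmain (w+1) (by omega)).2 rfl⟩
  have hBne : B.Nonempty := ⟨_, hBmem⟩
  refine hmin N W' hW'cyc ⟨B.max' hBne, ?_, ?_⟩
  · have h := B.max'_mem hBne
    simp only [hBdef, Finset.mem_filter] at h
    exact h.2
  · intro v hv
    have hwmax : w + 1 ≤ B.max' hBne := Finset.le_max' B _ hBmem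
    by_cases hvn : v ≤ n
    · have hle := (hmain v (by omega)).1
      rcases lt_or_eq_of_le hle with h | h
      · exfalso
        have hvB : v ∈ B := by
          simp only [hBdef, Finset.mem_filter, Finset.mem_range]
          exact ⟨by omega, h⟩
        have := Finset.le_max' B v hvB
        omega
      · exact h
    · obtain ⟨h1, h2⟩ := hzero v (by omega)
      rw [h1, h2]
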